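/- Let t ↦ (X(t), y(t)) be a differentiable trajectory of the replicator dynamics with all entries of X(t) and y(t) positive, and let (x*, y*) be an interior Nash equilibrium with value u*. Then at every time t, the time derivative of the conditional-sum divergence satisfies d/dt D(X(t), y(t)) = −dyᵀ X(t)ᵀ U dy, where dy = y(t) − y*. -/

import Mathlib

/-- Along a differentiable trajectory of the replicator dynamics with positive
entries, the time derivative of the conditional-sum divergence
`D(X,y) = Σ_j D_KL(x* ‖ x_j) + D_KL(y* ‖ y)` equals `−dyᵀ Xᵀ U dy`, where `dy = y(t) − y*`
and `(x*, y*)` is an interior Nash equilibrium with value `u*`. -/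
theorem stmt_3 (mX mY : ℕ) (U : Fin mX → Fin mY → ℝ)
    (X : ℝ → Fin mX → Fin mY → ℝ) (Y : ℝ → Fin mY → ℝ)
    (hXpos : ∀ t i j, 0 < X t i j) (hYpos : ∀ t j, 0 < Y t j)
    (hXsum : ∀ t j, ∑ i : Fin mX, X t i j = 1) (hYsum : ∀ t, ∑ j : Fin mY, Y t j = 1)
    -- replicator dynamics of X : ẋ_{i|j} = x_{i|j}(g_{ij} − Σ_{i'} x_{i'|j} g_{i'j}),
    -- g_{ij} = y_j Σ_{j'} u_{ij'} y_{j'}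
    (hX : ∀ t i j, HasDerivAt (fun s => X s i j)
      (X t i j * ((Y t j * ∑ j' : Fin mY, U i j' * Y t j') -
        ∑ i' : Fin mX, X t i' j * (Y t j * ∑ j' : Fin mY, U i' j' * Y t j'))) t)
    -- replicator dynamics of Y : ẏ_j = −y_j(h_j − Σ_{j'} y_{j'} h_{j'}),
    -- h_j = Σ_i u_{ij} x_i^st + Σ_i x_{i|j} Σ_{j'} u_{ij'} y_{j'}
    (hY : ∀ t j, HasDerivAt (fun s => Y s j)
      (-(Y t j * (((∑ i : Fin mX, U i j * (∑ j' : Fin mY, X t i j' * Y t j')) +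
          ∑ i : Fin mX, X t i j * ∑ j' : Fin mY, U i j' * Y t j') -
        ∑ j₂ : Fin mY, Y t j₂ *
          ((∑ i : Fin mX, U i j₂ * (∑ j' : Fin mY, X t i j' * Y t j')) +
            ∑ i : Fin mX, X t i j₂ * ∑ j' : Fin mY, U i j' * Y t j')))) t)
    -- interior Nash equilibrium (x*, y*) with value u*
    (xs : Fin mX → ℝ) (ys : Fin mY → ℝ) (ustar : ℝ)
    (hxspos : ∀ i, 0 < xs i) (hxssum : ∑ i : Fin mX, xs i = 1)
    (hyspos : ∀ j, 0 < ys j) (hyssum : ∑ j : Fin mY, ys j = 1)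
    (hNx : ∀ j, ∑ i : Fin mX, U i j * xs i = ustar)
    (hNy : ∀ i, ∑ j : Fin mY, U i j * ys j = ustar)
    (t : ℝ) :
    HasDerivAt
      (fun s => (∑ j : Fin mY, ∑ i : Fin mX, xs i * Real.log (xs i / X s i j)) +
        ∑ j : Fin mY, ys j * Real.log (ys j / Y s j))
      (-(∑ j : Fin mY, ∑ j' : Fin mY,
        (Y t j - ys j) * (∑ i : Fin mX, X t i j * U i j') * (Y t j' - ys j'))) t := by
  -- derivative of each X-term
  have hterm1 : ∀ (i : Fin mX) (j : Fin mY),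
      HasDerivAt (fun s => xs i * Real.log (xs i / X s i j))
        (-(xs i * ((Y t j * ∑ j' : Fin mY, U i j' * Y t j') -
          ∑ i' : Fin mX, X t i' j * (Y t j * ∑ j' : Fin mY, U i' j' * Y t j')))) t := by
    intro i j
    have hne : X t i j ≠ 0 := (hXpos t i j).ne'
    have hlog := (hX t i j).log hne
    rw [mul_div_cancel_left₀ _ hne] at hlog
    have heq : (fun s => xs i * Real.log (xs i / X s i j))
        = fun s => xs i * (Real.log (xs i) - Real.log (X s i j)) := by
      funext s
      rw [Real.log_div (hxspos i).ne' (hXpos s i j).ne']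
    rw [heq]
    have h2 := ((hasDerivAt_const t (Real.log (xs i))).fun_sub hlog).const_mul (xs i)
    refine h2.congr_deriv ?_
    ring
  -- derivative of each Y-term
  have hterm2 : ∀ (j : Fin mY),
      HasDerivAt (fun s => ys j * Real.log (ys j / Y s j))
        (ys j * (((∑ i : Fin mX, U i j * (∑ j' : Fin mY, X t i j' * Y t j')) +
          ∑ i : Fin mX, X t i j * ∑ j' : Fin mY, U i j' * Y t j') -
        ∑ j₂ : Fin mY, Y t j₂ *
          ((∑ i : Fin mX, U i j₂ * (∑ j' : Fin mY, X t i j' * Y t j')) +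
            ∑ i : Fin mX, X t i j₂ * ∑ j' : Fin mY, U i j' * Y t j'))) t := by
    intro j
    have hne : Y t j ≠ 0 := (hYpos t j).ne'
    have hlog := (hY t j).log hne
    rw [neg_div, mul_div_cancel_left₀ _ hne] at hlog
    have heq : (fun s => ys j * Real.log (ys j / Y s j))
        = fun s => ys j * (Real.log (ys j) - Real.log (Y s j)) := by
      funext s
      rw [Real.log_div (hyspos j).ne' (hYpos s j).ne']
    rw [heq]
    have h2 := ((hasDerivAt_const t (Real.log (ys j))).fun_sub hlog).const_mul (ys j)
    refine h2.congr_deriv ?_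
    ring
  have hD : HasDerivAt
      (fun s => (∑ j : Fin mY, ∑ i : Fin mX, xs i * Real.log (xs i / X s i j)) +
        ∑ j : Fin mY, ys j * Real.log (ys j / Y s j))
      ((∑ j : Fin mY, ∑ i : Fin mX,
        -(xs i * ((Y t j * ∑ j' : Fin mY, U i j' * Y t j') -
          ∑ i' : Fin mX, X t i' j * (Y t j * ∑ j' : Fin mY, U i' j' * Y t j')))) +
        ∑ j : Fin mY, ys j * (((∑ i : Fin mX, U i j * (∑ j' : Fin mY, X t i j' * Y t j')) +
          ∑ i : Fin mX, X t i j * ∑ j' : Fin mY, U i j' * Y t j') -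
        ∑ j₂ : Fin mY, Y t j₂ *
          ((∑ i : Fin mX, U i j₂ * (∑ j' : Fin mY, X t i j' * Y t j')) +
            ∑ i : Fin mX, X t i j₂ * ∑ j' : Fin mY, U i j' * Y t j'))) t :=
    (HasDerivAt.fun_sum (fun j _ => HasDerivAt.fun_sum (fun i _ => hterm1 i j))).fun_add
      (HasDerivAt.fun_sum (fun j _ => hterm2 j))
  convert hD using 1
  -- now pure algebra; key facts
  -- k2 : x*ᵀ U y = u*
  have k2 : ∑ i : Fin mX, xs i * ∑ j' : Fin mY, U i j' * Y t j' = ustar := by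
    calc ∑ i : Fin mX, xs i * ∑ j' : Fin mY, U i j' * Y t j'
        = ∑ i : Fin mX, ∑ j' : Fin mY, (U i j' * xs i) * Y t j' := by
          refine Finset.sum_congr rfl fun i _ => ?_
          rw [Finset.mul_sum]
          exact Finset.sum_congr rfl fun j' _ => by ring
      _ = ∑ j' : Fin mY, ∑ i : Fin mX, (U i j' * xs i) * Y t j' := Finset.sum_comm
      _ = ∑ j' : Fin mY, (∑ i : Fin mX, U i j' * xs i) * Y t j' := by
          refine Finset.sum_congr rfl fun j' _ => (Finset.sum_mul _ _ _).symm
      _ = ∑ j' : Fin mY, ustar * Y t j' := by simp_rw [hNx]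
      _ = ustar := by rw [← Finset.mul_sum, hYsum, mul_one]
  -- k4 : sum of stationary strategy is 1
  have k4 : ∑ i : Fin mX, ∑ j' : Fin mY, X t i j' * Y t j' = 1 := by
    rw [Finset.sum_comm]
    calc ∑ j' : Fin mY, ∑ i : Fin mX, X t i j' * Y t j'
        = ∑ j' : Fin mY, (∑ i : Fin mX, X t i j') * Y t j' := by
          refine Finset.sum_congr rfl fun j' _ => (Finset.sum_mul _ _ _).symm
      _ = ∑ j' : Fin mY, Y t j' := by
          refine Finset.sum_congr rfl fun j' _ => by rw [hXsum t j', one_mul]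
      _ = 1 := hYsum t
  -- k5 : Σ_j ys_j B_j = u*
  have k5 : ∑ j : Fin mY, ys j * ∑ i : Fin mX, U i j * (∑ j' : Fin mY, X t i j' * Y t j')
      = ustar := by
    calc ∑ j : Fin mY, ys j * ∑ i : Fin mX, U i j * (∑ j' : Fin mY, X t i j' * Y t j')
        = ∑ j : Fin mY, ∑ i : Fin mX,
            (U i j * ys j) * (∑ j' : Fin mY, X t i j' * Y t j') := by
          refine Finset.sum_congr rfl fun j _ => ?_
          rw [Finset.mul_sum]
          exact Finset.sum_congr rfl fun i _ => by ring
      _ = ∑ i : Fin mX, ∑ j : Fin mY,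
            (U i j * ys j) * (∑ j' : Fin mY, X t i j' * Y t j') := Finset.sum_comm
      _ = ∑ i : Fin mX, (∑ j : Fin mY, U i j * ys j) * (∑ j' : Fin mY, X t i j' * Y t j') := by
          refine Finset.sum_congr rfl fun i _ => (Finset.sum_mul _ _ _).symm
      _ = ∑ i : Fin mX, ustar * (∑ j' : Fin mY, X t i j' * Y t j') := by simp_rw [hNy]
      _ = ustar := by rw [← Finset.mul_sum, k4, mul_one]
  -- k6 : Σ_j y_j B_j = S
  have k6 : ∑ j : Fin mY, Y t j * ∑ i : Fin mX, U i j * (∑ j' : Fin mY, X t i j' * Y t j')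
      = ∑ j : Fin mY, Y t j * ∑ i : Fin mX, X t i j * ∑ j' : Fin mY, U i j' * Y t j' := by
    calc ∑ j : Fin mY, Y t j * ∑ i : Fin mX, U i j * (∑ j' : Fin mY, X t i j' * Y t j')
        = ∑ j : Fin mY, ∑ i : Fin mX,
            (U i j * Y t j) * (∑ j' : Fin mY, X t i j' * Y t j') := by
          refine Finset.sum_congr rfl fun j _ => ?_
          rw [Finset.mul_sum]
          exact Finset.sum_congr rfl fun i _ => by ring
      _ = ∑ i : Fin mX, ∑ j : Fin mY,
            (U i j * Y t j) * (∑ j' : Fin mY, X t i j' * Y t j') := Finset.sum_comm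
      _ = ∑ i : Fin mX,
            (∑ j' : Fin mY, X t i j' * Y t j') * (∑ j : Fin mY, U i j * Y t j) := by
          refine Finset.sum_congr rfl fun i _ => ?_
          rw [← Finset.sum_mul, mul_comm]
      _ = ∑ i : Fin mX, ∑ j' : Fin mY,
            (X t i j' * Y t j') * (∑ j : Fin mY, U i j * Y t j) := by
          refine Finset.sum_congr rfl fun i _ => Finset.sum_mul _ _ _
      _ = ∑ j' : Fin mY, ∑ i : Fin mX,
            (X t i j' * Y t j') * (∑ j : Fin mY, U i j * Y t j) := Finset.sum_comm
      _ = ∑ j : Fin mY, Y t j * ∑ i : Fin mX, X t i j * ∑ j' : Fin mY, U i j' * Y t j' := by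
          refine Finset.sum_congr rfl fun j' _ => ?_
          rw [Finset.mul_sum]
          exact Finset.sum_congr rfl fun i _ => by ring
  -- L1 : total derivative of the X-part
  have hL1 : (∑ j : Fin mY, ∑ i : Fin mX,
        -(xs i * ((Y t j * ∑ j' : Fin mY, U i j' * Y t j') -
          ∑ i' : Fin mX, X t i' j * (Y t j * ∑ j' : Fin mY, U i' j' * Y t j'))))
      = (∑ j : Fin mY, Y t j * ∑ i : Fin mX, X t i j * ∑ j' : Fin mY, U i j' * Y t j')
        - ustar := by
    have hjj : ∀ j : Fin mY, ∑ i : Fin mX,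
        -(xs i * ((Y t j * ∑ j' : Fin mY, U i j' * Y t j') -
          ∑ i' : Fin mX, X t i' j * (Y t j * ∑ j' : Fin mY, U i' j' * Y t j')))
        = Y t j * (∑ i : Fin mX, X t i j * ∑ j' : Fin mY, U i j' * Y t j')
          - Y t j * ustar := by
      intro j
      have hinner : ∑ i' : Fin mX, X t i' j * (Y t j * ∑ j' : Fin mY, U i' j' * Y t j')
          = Y t j * ∑ i' : Fin mX, X t i' j * ∑ j' : Fin mY, U i' j' * Y t j' := by
        rw [Finset.mul_sum]
        exact Finset.sum_congr rfl fun i' _ => by ring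
      calc ∑ i : Fin mX,
            -(xs i * ((Y t j * ∑ j' : Fin mY, U i j' * Y t j') -
              ∑ i' : Fin mX, X t i' j * (Y t j * ∑ j' : Fin mY, U i' j' * Y t j')))
          = ∑ i : Fin mX,
              ((Y t j * ∑ i' : Fin mX, X t i' j * ∑ j' : Fin mY, U i' j' * Y t j') * xs i
                - Y t j * (xs i * ∑ j' : Fin mY, U i j' * Y t j')) := by
            refine Finset.sum_congr rfl fun i _ => ?_
            rw [hinner]
            ring
        _ = (Y t j * ∑ i' : Fin mX, X t i' j * ∑ j' : Fin mY, U i' j' * Y t j')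
              * (∑ i : Fin mX, xs i)
            - Y t j * (∑ i : Fin mX, xs i * ∑ j' : Fin mY, U i j' * Y t j') := by
            rw [Finset.sum_sub_distrib, ← Finset.mul_sum, ← Finset.mul_sum]
        _ = Y t j * (∑ i : Fin mX, X t i j * ∑ j' : Fin mY, U i j' * Y t j')
              - Y t j * ustar := by rw [hxssum, mul_one, k2]
    calc (∑ j : Fin mY, ∑ i : Fin mX,
        -(xs i * ((Y t j * ∑ j' : Fin mY, U i j' * Y t j') -
          ∑ i' : Fin mX, X t i' j * (Y t j * ∑ j' : Fin mY, U i' j' * Y t j'))))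
        = ∑ j : Fin mY,
            (Y t j * (∑ i : Fin mX, X t i j * ∑ j' : Fin mY, U i j' * Y t j')
              - Y t j * ustar) :=
          Finset.sum_congr rfl fun j _ => hjj j
      _ = (∑ j : Fin mY, Y t j * ∑ i : Fin mX, X t i j * ∑ j' : Fin mY, U i j' * Y t j')
            - (∑ j : Fin mY, Y t j) * ustar := by
          rw [Finset.sum_sub_distrib, Finset.sum_mul]
      _ = _ := by rw [hYsum, one_mul]
  -- L2 : total derivative of the Y-part
  have hbar : ∑ j₂ : Fin mY, Y t j₂ *
        ((∑ i : Fin mX, U i j₂ * (∑ j' : Fin mY, X t i j' * Y t j')) +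
          ∑ i : Fin mX, X t i j₂ * ∑ j' : Fin mY, U i j' * Y t j')
      = 2 * ∑ j : Fin mY, Y t j * ∑ i : Fin mX, X t i j * ∑ j' : Fin mY, U i j' * Y t j' := by
    calc ∑ j₂ : Fin mY, Y t j₂ *
        ((∑ i : Fin mX, U i j₂ * (∑ j' : Fin mY, X t i j' * Y t j')) +
          ∑ i : Fin mX, X t i j₂ * ∑ j' : Fin mY, U i j' * Y t j')
        = (∑ j₂ : Fin mY, Y t j₂ * ∑ i : Fin mX, U i j₂ * (∑ j' : Fin mY, X t i j' * Y t j'))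
          + ∑ j₂ : Fin mY, Y t j₂ * ∑ i : Fin mX, X t i j₂ * ∑ j' : Fin mY, U i j' * Y t j' := by
          rw [← Finset.sum_add_distrib]
          exact Finset.sum_congr rfl fun j₂ _ => by ring
      _ = _ := by rw [k6]; ring
  have hL2 : (∑ j : Fin mY, ys j * (((∑ i : Fin mX, U i j * (∑ j' : Fin mY, X t i j' * Y t j')) +
          ∑ i : Fin mX, X t i j * ∑ j' : Fin mY, U i j' * Y t j') -
        ∑ j₂ : Fin mY, Y t j₂ *
          ((∑ i : Fin mX, U i j₂ * (∑ j' : Fin mY, X t i j' * Y t j')) +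
            ∑ i : Fin mX, X t i j₂ * ∑ j' : Fin mY, U i j' * Y t j')))
      = ustar
        + (∑ j : Fin mY, ys j * ∑ i : Fin mX, X t i j * ∑ j' : Fin mY, U i j' * Y t j')
        - 2 * ∑ j : Fin mY, Y t j * ∑ i : Fin mX, X t i j * ∑ j' : Fin mY, U i j' * Y t j' := by
    simp_rw [hbar]
    calc ∑ j : Fin mY, ys j * (((∑ i : Fin mX, U i j * (∑ j' : Fin mY, X t i j' * Y t j')) +
          ∑ i : Fin mX, X t i j * ∑ j' : Fin mY, U i j' * Y t j') -
          2 * ∑ j₂ : Fin mY, Y t j₂ * ∑ i : Fin mX, X t i j₂ * ∑ j' : Fin mY, U i j' * Y t j')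
        = (∑ j : Fin mY, ys j * ∑ i : Fin mX, U i j * (∑ j' : Fin mY, X t i j' * Y t j'))
          + (∑ j : Fin mY, ys j * ∑ i : Fin mX, X t i j * ∑ j' : Fin mY, U i j' * Y t j')
          - (∑ j : Fin mY, ys j)
            * (2 * ∑ j₂ : Fin mY, Y t j₂ * ∑ i : Fin mX, X t i j₂ *
                 ∑ j' : Fin mY, U i j' * Y t j') := by
          rw [← Finset.sum_add_distrib, Finset.sum_mul, ← Finset.sum_sub_distrib]
          exact Finset.sum_congr rfl fun j _ => by ring
      _ = _ := by rw [k5, hyssum, one_mul]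
  -- RHS : the quadratic form equals S - T
  have hRHS : (∑ j : Fin mY, ∑ j' : Fin mY,
        (Y t j - ys j) * (∑ i : Fin mX, X t i j * U i j') * (Y t j' - ys j'))
      = (∑ j : Fin mY, Y t j * ∑ i : Fin mX, X t i j * ∑ j' : Fin mY, U i j' * Y t j')
        - (∑ j : Fin mY, ys j * ∑ i : Fin mX, X t i j * ∑ j' : Fin mY, U i j' * Y t j') := by
    have hinner : ∀ j : Fin mY,
        ∑ j' : Fin mY, (Y t j - ys j) * (∑ i : Fin mX, X t i j * U i j') * (Y t j' - ys j')
        = (Y t j - ys j)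
          * ((∑ i : Fin mX, X t i j * ∑ j' : Fin mY, U i j' * Y t j') - ustar) := by
      intro j
      calc ∑ j' : Fin mY, (Y t j - ys j) * (∑ i : Fin mX, X t i j * U i j') * (Y t j' - ys j')
          = ∑ j' : Fin mY, ∑ i : Fin mX,
              (Y t j - ys j) * (X t i j * U i j') * (Y t j' - ys j') := by
            refine Finset.sum_congr rfl fun j' _ => ?_
            rw [Finset.mul_sum, Finset.sum_mul]
        _ = ∑ i : Fin mX, ∑ j' : Fin mY,
              (Y t j - ys j) * (X t i j * U i j') * (Y t j' - ys j') := Finset.sum_comm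
        _ = ∑ i : Fin mX, (Y t j - ys j) * X t i j *
              ((∑ j' : Fin mY, U i j' * Y t j') - (∑ j' : Fin mY, U i j' * ys j')) := by
            refine Finset.sum_congr rfl fun i _ => ?_
            rw [← Finset.sum_sub_distrib, Finset.mul_sum]
            exact Finset.sum_congr rfl fun j' _ => by ring
        _ = ∑ i : Fin mX, ((Y t j - ys j) *
              (X t i j * ∑ j' : Fin mY, U i j' * Y t j')
              - (Y t j - ys j) * ustar * X t i j) := by
            refine Finset.sum_congr rfl fun i _ => ?_
            rw [hNy]
            ring
        _ = (Y t j - ys j) * (∑ i : Fin mX, X t i j * ∑ j' : Fin mY, U i j' * Y t j')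
              - (Y t j - ys j) * ustar * (∑ i : Fin mX, X t i j) := by
            rw [Finset.sum_sub_distrib, ← Finset.mul_sum, ← Finset.mul_sum]
        _ = _ := by rw [hXsum t j]; ring
    calc ∑ j : Fin mY, ∑ j' : Fin mY,
        (Y t j - ys j) * (∑ i : Fin mX, X t i j * U i j') * (Y t j' - ys j')
        = ∑ j : Fin mY, ((Y t j * ∑ i : Fin mX, X t i j * ∑ j' : Fin mY, U i j' * Y t j')
            - (ys j * ∑ i : Fin mX, X t i j * ∑ j' : Fin mY, U i j' * Y t j')
            - (Y t j * ustar - ys j * ustar)) := by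
          refine Finset.sum_congr rfl fun j _ => ?_
          rw [hinner j]
          ring
      _ = (∑ j : Fin mY, Y t j * ∑ i : Fin mX, X t i j * ∑ j' : Fin mY, U i j' * Y t j')
            - (∑ j : Fin mY, ys j * ∑ i : Fin mX, X t i j * ∑ j' : Fin mY, U i j' * Y t j')
            - ((∑ j : Fin mY, Y t j) * ustar - (∑ j : Fin mY, ys j) * ustar) := by
          rw [Finset.sum_sub_distrib, Finset.sum_sub_distrib, Finset.sum_sub_distrib,
            Finset.sum_mul, Finset.sum_mul]
      _ = _ := by rw [hYsum, hyssum]; ring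
  rw [hL1, hL2, hRHS]
  ring
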